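/- (Pressure positivity of the flux limiter) Let γ > 1, ε_p > 0, λ > 0, and let U, F*, F^LF ∈ ℝ³ be such that the half-updates have positive density, ρ(U − 2λF^LF) > 0 and ρ(U − 2λF*) > 0, and the Lax–Friedrichs half-update satisfies p(U − 2λF^LF) ≥ ε_p. Define θ_p = 1 if p(U − 2λF*) ≥ ε_p, and θ_p = (p(U − 2λF^LF) − ε_p)/(p(U − 2λF^LF) − p(U − 2λF*)) otherwise, and the limited flux F** = (1−θ_p)F^LF + θ_p F*. Then θ_p ∈ [0,1] and p(U − 2λF**) ≥ ε_p. -/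

import Mathlib

/-- Density of a conservative state `U = (ρ, m, E)`. -/
def rho (U : ℝ × ℝ × ℝ) : ℝ := U.1

/-- Pressure `p(U) = (γ−1)(E − m²/(2ρ))` of a conservative state `U = (ρ, m, E)`. -/
noncomputable def pres (γ : ℝ) (U : ℝ × ℝ × ℝ) : ℝ :=
  (γ - 1) * (U.2.2 - U.2.1 ^ 2 / (2 * U.1))

/-- Concavity of the pressure under convex combinations of states with positive density. -/
lemma pres_concave (γ θ : ℝ) (hγ : 1 ≤ γ) (A B : ℝ × ℝ × ℝ) (hA : 0 < A.1) (hB : 0 < B.1)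
    (h0 : 0 ≤ θ) (h1 : θ ≤ 1) :
    (1 - θ) * pres γ A + θ * pres γ B ≤ pres γ ((1 - θ) • A + θ • B) := by
  obtain ⟨ρ1, m1, E1⟩ := A
  obtain ⟨ρ2, m2, E2⟩ := B
  simp only [pres, Prod.smul_fst, Prod.smul_snd, Prod.fst_add, Prod.snd_add, smul_eq_mul] at *
  have h1' : 0 ≤ 1 - θ := by linarith
  have hρ' : 0 < (1 - θ) * ρ1 + θ * ρ2 := by
    nlinarith [mul_nonneg h0 hB.le, mul_nonneg h1' hA.le]
  have hθθ : 0 ≤ θ * (1 - θ) := mul_nonneg h0 h1'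
  have key : ((1 - θ) * m1 + θ * m2) ^ 2 / (2 * ((1 - θ) * ρ1 + θ * ρ2)) ≤
      (1 - θ) * (m1 ^ 2 / (2 * ρ1)) + θ * (m2 ^ 2 / (2 * ρ2)) := by
    rw [show (1 - θ) * (m1 ^ 2 / (2 * ρ1)) + θ * (m2 ^ 2 / (2 * ρ2))
        = ((1 - θ) * m1 ^ 2 * ρ2 + θ * m2 ^ 2 * ρ1) / (2 * ρ1 * ρ2) by
          field_simp,
      div_le_div_iff₀ (by positivity) (by positivity)]
    nlinarith [mul_nonneg hθθ (sq_nonneg (m1 * ρ2 - m2 * ρ1))]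
  have hγ' : 0 ≤ γ - 1 := by linarith
  nlinarith [mul_le_mul_of_nonneg_left key hγ']

/-- Pressure positivity of the positivity-preserving flux limiter: the limited flux
`F** = (1−θ_p)F^LF + θ_p F*` yields a half-update with pressure at least `ε_p`. -/
theorem flux_limiter_pressure (γ : ℝ) (hγ : 1 < γ) (εp lam : ℝ) (hεp : 0 < εp)
    (hlam : 0 < lam) (U Fstar FLF : ℝ × ℝ × ℝ)
    (hρLF : 0 < rho (U - (2 * lam) • FLF))
    (hρstar : 0 < rho (U - (2 * lam) • Fstar))
    (hpLF : εp ≤ pres γ (U - (2 * lam) • FLF))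
    (θp : ℝ)
    (hθp : θp = if εp ≤ pres γ (U - (2 * lam) • Fstar) then 1
      else (pres γ (U - (2 * lam) • FLF) - εp) /
        (pres γ (U - (2 * lam) • FLF) - pres γ (U - (2 * lam) • Fstar)))
    (Fss : ℝ × ℝ × ℝ) (hFss : Fss = (1 - θp) • FLF + θp • Fstar) :
    (0 ≤ θp ∧ θp ≤ 1) ∧ εp ≤ pres γ (U - (2 * lam) • Fss) := by
  set A := U - (2 * lam) • FLF with hA
  set B := U - (2 * lam) • Fstar with hB
  have hsplit : U - (2 * lam) • Fss = (1 - θp) • A + θp • B := by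
    rw [hFss, hA, hB]; module
  have hθrange : 0 ≤ θp ∧ θp ≤ 1 := by
    rw [hθp]
    split_ifs with h
    · exact ⟨zero_le_one, le_refl 1⟩
    · push_neg at h
      have hd : 0 < pres γ A - pres γ B := by linarith
      constructor
      · apply div_nonneg (by linarith) hd.le
      · rw [div_le_one hd]; linarith
  refine ⟨hθrange, ?_⟩
  rw [hsplit]
  have hconc := pres_concave γ θp hγ.le A B hρLF hρstar hθrange.1 hθrange.2
  refine le_trans ?_ hconc
  rw [hθp]
  split_ifs with h
  · simpa only [sub_self, zero_mul, one_mul, zero_add] using h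
  · push_neg at h
    have hd : pres γ A - pres γ B ≠ 0 := by intro h'; rw [sub_eq_zero] at h'; linarith
    rw [show (1 - (pres γ A - εp) / (pres γ A - pres γ B)) * pres γ A +
        (pres γ A - εp) / (pres γ A - pres γ B) * pres γ B = εp by field_simp; ring]
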